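/- For any measurable sets Y₀,…,Y_K and any measure-preserving automorphism F of (𝒳, ℬ, μ), ‖π_{Y_K} U_F π_{Y_{K−1}} U_F ⋯ U_F π_{Y_1} U_F π_{Y_0}‖_μ² = μ(Y_K ∩ F⁻¹(Y_{K−1}) ∩ ⋯ ∩ F^{−K+1}(Y_1) ∩ F^{−K}(Y_0)). -/

import Mathlib

open MeasureTheory

namespace MuNorm

variable {𝒳 : Type*} [MeasurableSpace 𝒳]

/-- A finite measurable partition of `𝒳` (up to measure zero). -/
structure Partition (μ : Measure 𝒳) where
  J : ℕ
  Y : Fin J → Set 𝒳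
  meas : ∀ j, MeasurableSet (Y j)
  cover : μ (Set.univ \ ⋃ j, Y j) = 0
  disj : ∀ j k, j ≠ k → μ (Y j ∩ Y k) = 0

/-- `ℳ_χ(W) = ∑_j μ(Y_j) ‖W π_{Y_j}‖²`. -/
noncomputable def M (μ : Measure 𝒳)
    (proj : Set 𝒳 → (Lp ℂ 2 μ →L[ℂ] Lp ℂ 2 μ))
    (W : Lp ℂ 2 μ →L[ℂ] Lp ℂ 2 μ) (χ : Partition μ) : ℝ :=
  ∑ j, (μ (χ.Y j)).toReal * ‖W.comp (proj (χ.Y j))‖ ^ 2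

/-- `‖W‖_μ = inf_χ sqrt(ℳ_χ(W))`. -/
noncomputable def munorm (μ : Measure 𝒳)
    (proj : Set 𝒳 → (Lp ℂ 2 μ →L[ℂ] Lp ℂ 2 μ))
    (W : Lp ℂ 2 μ →L[ℂ] Lp ℂ 2 μ) : ℝ :=
  ⨅ χ : Partition μ, Real.sqrt (M μ proj W χ)

/-- `proj Y` is the operator of multiplication by the indicator of `Y`. -/
def IsIndicatorProj (μ : Measure 𝒳)
    (proj : Set 𝒳 → (Lp ℂ 2 μ →L[ℂ] Lp ℂ 2 μ)) : Prop :=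
  ∀ Y : Set 𝒳, MeasurableSet Y → ∀ f : Lp ℂ 2 μ,
    (proj Y f : 𝒳 → ℂ) =ᵐ[μ] Y.indicator f

/-- The operator `π_{Y_K} U π_{Y_{K-1}} U ⋯ U π_{Y_1} U π_{Y_0}`. -/
noncomputable def chainOp (μ : Measure 𝒳)
    (proj : Set 𝒳 → (Lp ℂ 2 μ →L[ℂ] Lp ℂ 2 μ))
    (U : Lp ℂ 2 μ →L[ℂ] Lp ℂ 2 μ) :
    (K : ℕ) → (Fin (K + 1) → Set 𝒳) → (Lp ℂ 2 μ →L[ℂ] Lp ℂ 2 μ)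
  | 0, Y => proj (Y 0)
  | K + 1, Y => (proj (Y (Fin.last (K + 1)))).comp
      (U.comp (chainOp μ proj U K fun i => Y i.castSucc))

lemma chain_ae (μ : Measure 𝒳)
    (proj : Set 𝒳 → (Lp ℂ 2 μ →L[ℂ] Lp ℂ 2 μ))
    (hproj : IsIndicatorProj μ proj)
    (F : 𝒳 ≃ᵐ 𝒳) (hF : MeasurePreserving F μ μ)
    (U : Lp ℂ 2 μ →L[ℂ] Lp ℂ 2 μ)
    (hU : ∀ f : Lp ℂ 2 μ, (U f : 𝒳 → ℂ) =ᵐ[μ] fun x => f (F x)) :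
    ∀ (K : ℕ) (Y : Fin (K + 1) → Set 𝒳), (∀ k, MeasurableSet (Y k)) →
      ∀ f : Lp ℂ 2 μ,
      (chainOp μ proj U K Y f : 𝒳 → ℂ) =ᵐ[μ]
        (⋂ k : Fin (K + 1), (⇑F)^[K - (k : ℕ)] ⁻¹' Y k).indicator
          (fun x => f ((⇑F)^[K] x)) := by
  intro K
  induction K with
  | zero =>
    intro Y hY f
    have h := hproj (Y 0) (hY 0) f
    have hset : (⋂ k : Fin 1, (⇑F)^[0 - (k : ℕ)] ⁻¹' Y k) = Y 0 := by
      ext x; simp [Fin.forall_fin_one]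
    refine h.trans (Filter.EventuallyEq.of_eq ?_)
    rw [hset]; simp [chainOp]
  | succ K ih =>
    intro Y hY f
    have hY'm : ∀ k : Fin (K + 1), MeasurableSet (Y k.castSucc) := fun k => hY _
    set Y' : Fin (K + 1) → Set 𝒳 := fun i => Y i.castSucc with hY'
    set Z' := ⋂ k : Fin (K + 1), (⇑F)^[K - (k : ℕ)] ⁻¹' Y' k with hZ'
    have h0 : (chainOp μ proj U (K + 1) Y f : 𝒳 → ℂ)
        =ᵐ[μ] (Y (Fin.last (K + 1))).indicator (U (chainOp μ proj U K Y' f)) := by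
      exact hproj (Y (Fin.last (K + 1))) (hY _) (U (chainOp μ proj U K Y' f))
    have h1 : ((U (chainOp μ proj U K Y' f)) : 𝒳 → ℂ)
        =ᵐ[μ] fun x => (chainOp μ proj U K Y' f) (F x) := hU _
    have h2 : (fun x => (chainOp μ proj U K Y' f : 𝒳 → ℂ) (F x))
        =ᵐ[μ] fun x => Z'.indicator (fun y => f ((⇑F)^[K] y)) (F x) := by
      have := hF.quasiMeasurePreserving.ae_eq_comp (ih Y' hY'm f)
      simpa [Function.comp_def] using this
    have hmem : ∀ x, x ∈ (⋂ k : Fin (K + 2), (⇑F)^[K + 1 - (k : ℕ)] ⁻¹' Y k) ↔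
        (x ∈ Y (Fin.last (K + 1)) ∧ F x ∈ Z') := by
      intro x
      simp only [hZ', Set.mem_iInter, Set.mem_preimage, hY']
      constructor
      · intro h
        refine ⟨by simpa using h (Fin.last (K + 1)), fun i => ?_⟩
        have hi := h i.castSucc
        have hle : (i : ℕ) ≤ K := Nat.lt_succ_iff.mp i.isLt
        rwa [Fin.coe_castSucc, Nat.succ_sub hle, Function.iterate_succ_apply] at hi
      · rintro ⟨hl, hc⟩ k
        induction k using Fin.lastCases with
        | last => simpa using hl
        | cast i =>
          have hle : (i : ℕ) ≤ K := Nat.lt_succ_iff.mp i.isLt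
          rw [Fin.coe_castSucc, Nat.succ_sub hle, Function.iterate_succ_apply]
          exact hc i
    have hfinal : (Y (Fin.last (K + 1))).indicator
          (fun x => Z'.indicator (fun y => f ((⇑F)^[K] y)) (F x))
        = (⋂ k : Fin (K + 2), (⇑F)^[K + 1 - (k : ℕ)] ⁻¹' Y k).indicator
            (fun x => f ((⇑F)^[K + 1] x)) := by
      funext x
      by_cases hx : x ∈ (⋂ k : Fin (K + 2), (⇑F)^[K + 1 - (k : ℕ)] ⁻¹' Y k)
      · obtain ⟨hl, hc⟩ := (hmem x).mp hx
        rw [Set.indicator_of_mem hx, Set.indicator_of_mem hl, Set.indicator_of_mem hc,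
          Function.iterate_succ_apply]
      · rw [Set.indicator_of_notMem hx]
        rcases not_and_or.mp ((hmem x).not.mp hx) with h | h
        · rw [Set.indicator_of_notMem h]
        · by_cases hl : x ∈ Y (Fin.last (K + 1))
          · rw [Set.indicator_of_mem hl, Set.indicator_of_notMem h]
          · rw [Set.indicator_of_notMem hl]
    calc (chainOp μ proj U (K + 1) Y f : 𝒳 → ℂ)
        =ᵐ[μ] (Y (Fin.last (K + 1))).indicator (U (chainOp μ proj U K Y' f)) := h0
      _ =ᵐ[μ] (Y (Fin.last (K + 1))).indicator
            (fun x => Z'.indicator (fun y => f ((⇑F)^[K] y)) (F x)) :=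
          (h1.trans h2).indicator
      _ = _ := hfinal


-- generic norm lemmas for an operator W with Wf =ᵐ Z.indicator (f ∘ T)
section Norm

variable (μ : Measure 𝒳) [IsProbabilityMeasure μ]
  (proj : Set 𝒳 → (Lp ℂ 2 μ →L[ℂ] Lp ℂ 2 μ))
  (W : Lp ℂ 2 μ →L[ℂ] Lp ℂ 2 μ)
  (T : 𝒳 → 𝒳) (hT : MeasurePreserving T μ μ)
  (Z : Set 𝒳) (hZ : MeasurableSet Z)
  (hW : ∀ f : Lp ℂ 2 μ, (W f : 𝒳 → ℂ) =ᵐ[μ] Z.indicator (fun x => f (T x)))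
  (hproj : ∀ Y : Set 𝒳, MeasurableSet Y → ∀ f : Lp ℂ 2 μ,
    (proj Y f : 𝒳 → ℂ) =ᵐ[μ] Y.indicator f)

include hT hW hproj

lemma opnorm_le_one (A : Set 𝒳) (hA : MeasurableSet A) :
    ‖W.comp (proj A)‖ ≤ 1 := by
  refine ContinuousLinearMap.opNorm_le_bound _ zero_le_one fun f => ?_
  rw [ContinuousLinearMap.comp_apply, one_mul]
  set g := proj A f with hg
  have e1 : ‖W g‖ = (eLpNorm (Z.indicator fun x => g (T x)) 2 μ).toReal := by
    rw [Lp.norm_def, eLpNorm_congr_ae (hW g)]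
  have e2 : eLpNorm (Z.indicator fun x => g (T x)) 2 μ ≤ eLpNorm (f : 𝒳 → ℂ) 2 μ := by
    refine le_trans (eLpNorm_indicator_le _) ?_
    have e3 : eLpNorm ((g : 𝒳 → ℂ) ∘ T) 2 μ = eLpNorm (g : 𝒳 → ℂ) 2 μ :=
      eLpNorm_comp_measurePreserving (Lp.aestronglyMeasurable g) hT
    rw [show (fun x => (g : 𝒳 → ℂ) (T x)) = (g : 𝒳 → ℂ) ∘ T from rfl, e3,
      eLpNorm_congr_ae (hproj A hA f)]
    exact eLpNorm_indicator_le _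
  rw [e1, Lp.norm_def]
  exact ENNReal.toReal_mono (Lp.eLpNorm_ne_top f) e2

end Norm

section Norm2

variable (μ : Measure 𝒳) [IsProbabilityMeasure μ]
  (proj : Set 𝒳 → (Lp ℂ 2 μ →L[ℂ] Lp ℂ 2 μ))
  (W : Lp ℂ 2 μ →L[ℂ] Lp ℂ 2 μ)
  (F : 𝒳 ≃ᵐ 𝒳) (hF : MeasurePreserving F μ μ) (K : ℕ)
  (Z : Set 𝒳) (hZ : MeasurableSet Z)
  (hW : ∀ f : Lp ℂ 2 μ, (W f : 𝒳 → ℂ) =ᵐ[μ] Z.indicator (fun x => f ((⇑F)^[K] x)))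
  (hproj : ∀ Y : Set 𝒳, MeasurableSet Y → ∀ f : Lp ℂ 2 μ,
    (proj Y f : 𝒳 → ℂ) =ᵐ[μ] Y.indicator f)

include hF hZ hW hproj

lemma one_le_opnorm (A : Set 𝒳) (hA : MeasurableSet A)
    (hpos : μ (Z ∩ (⇑F)^[K] ⁻¹' A) ≠ 0) : 1 ≤ ‖W.comp (proj A)‖ := by
  set T : 𝒳 → 𝒳 := (⇑F)^[K] with hTdef
  have hT : MeasurePreserving T μ μ := hF.iterate K
  set S := Z ∩ T ⁻¹' A with hSdef
  have hS : MeasurableSet S := hZ.inter (hA.preimage hT.measurable)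
  set B := (⇑F.symm)^[K] ⁻¹' S with hBdef
  have hB : MeasurableSet B :=
    hS.preimage (F.symm.measurable.iterate K)
  have hli : ∀ x, (⇑F.symm)^[K] (T x) = x := fun x =>
    (Function.LeftInverse.iterate F.symm_apply_apply K) x
  have hBS : T ⁻¹' B = S := by
    ext x; simp [hBdef, Set.mem_preimage, hli x]
  have hμB : μ B = μ S :=
    ((MeasurePreserving.symm F hF).iterate K).measure_preimage hS.nullMeasurableSet
  set f : Lp ℂ 2 μ := indicatorConstLp 2 hB (measure_ne_top μ B) (1 : ℂ) with hfdef
  have hfnorm : ‖f‖ = (μ S).toReal ^ (1 / 2 : ℝ) := by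
    rw [hfdef, norm_indicatorConstLp (by norm_num) (by norm_num)]
    simp [hμB]
    rw [measureReal_def, hμB]
  have hg : ((proj A f : Lp ℂ 2 μ) : 𝒳 → ℂ)
      =ᵐ[μ] A.indicator (B.indicator fun _ => (1 : ℂ)) :=
    (hproj A hA f).trans (Filter.EventuallyEq.indicator indicatorConstLp_coeFn)
  have hcomp : (fun x => (proj A f : Lp ℂ 2 μ) (T x))
      =ᵐ[μ] fun x => A.indicator (B.indicator fun _ => (1 : ℂ)) (T x) := by
    have := hT.quasiMeasurePreserving.ae_eq_comp hg
    simpa [Function.comp_def] using this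
  have hpt : Z.indicator (fun x => A.indicator (B.indicator fun _ => (1 : ℂ)) (T x))
      = S.indicator fun _ => (1 : ℂ) := by
    funext x
    by_cases hxS : x ∈ S
    · have hxZ : x ∈ Z := hxS.1
      have hxA : T x ∈ A := hxS.2
      have hxB : T x ∈ B := by rw [← Set.mem_preimage, hBS]; exact hxS
      rw [Set.indicator_of_mem hxS, Set.indicator_of_mem hxZ,
        Set.indicator_of_mem hxA, Set.indicator_of_mem hxB]
    · rw [Set.indicator_of_notMem hxS]
      by_cases hxZ : x ∈ Z
      · have hxB : T x ∉ B := by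
          rw [← Set.mem_preimage, hBS]; exact hxS
        rw [Set.indicator_of_mem hxZ]
        by_cases hxA : T x ∈ A
        · rw [Set.indicator_of_mem hxA, Set.indicator_of_notMem hxB]
        · rw [Set.indicator_of_notMem hxA]
      · rw [Set.indicator_of_notMem hxZ]
  have hWf : ((W (proj A f) : Lp ℂ 2 μ) : 𝒳 → ℂ) =ᵐ[μ] S.indicator fun _ => (1 : ℂ) := by
    refine (hW (proj A f)).trans ?_
    rw [← hpt]
    exact Filter.EventuallyEq.indicator hcomp
  have hWfnorm : ‖W (proj A f)‖ = (μ S).toReal ^ (1 / 2 : ℝ) := by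
    rw [Lp.norm_def, eLpNorm_congr_ae hWf,
      eLpNorm_indicator_const hS (by norm_num) (by norm_num)]
    simp [ENNReal.toReal_rpow]
  have hfpos : 0 < ‖f‖ := by
    rw [hfnorm]
    have : 0 < (μ S).toReal := ENNReal.toReal_pos hpos (measure_ne_top μ S)
    positivity
  have hle := (W.comp (proj A)).le_opNorm f
  rw [ContinuousLinearMap.comp_apply, hWfnorm, ← hfnorm] at hle
  exact le_of_mul_le_mul_right (by linarith) hfpos

lemma opnorm_eq_zero (A : Set 𝒳) (hA : MeasurableSet A)
    (hzero : Z ∩ (⇑F)^[K] ⁻¹' A = ∅) : ‖W.comp (proj A)‖ = 0 := by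
  set T : 𝒳 → 𝒳 := (⇑F)^[K] with hTdef
  have hT : MeasurePreserving T μ μ := hF.iterate K
  refine le_antisymm ?_ (norm_nonneg _)
  refine ContinuousLinearMap.opNorm_le_bound _ le_rfl fun f => ?_
  rw [zero_mul, ContinuousLinearMap.comp_apply]
  have hg : ((proj A f : Lp ℂ 2 μ) : 𝒳 → ℂ) =ᵐ[μ] A.indicator f := hproj A hA f
  have hcomp : (fun x => (proj A f : Lp ℂ 2 μ) (T x))
      =ᵐ[μ] fun x => A.indicator f (T x) := by
    have := hT.quasiMeasurePreserving.ae_eq_comp hg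
    simpa [Function.comp_def] using this
  have hpt : Z.indicator (fun x => A.indicator (f : 𝒳 → ℂ) (T x)) = 0 := by
    funext x
    by_cases hxZ : x ∈ Z
    · have hxA : T x ∉ A := fun hxA =>
        Set.eq_empty_iff_forall_notMem.mp hzero x ⟨hxZ, hxA⟩
      rw [Set.indicator_of_mem hxZ, Set.indicator_of_notMem hxA]; rfl
    · rw [Set.indicator_of_notMem hxZ]; rfl
  have hWf : ((W (proj A f) : Lp ℂ 2 μ) : 𝒳 → ℂ) =ᵐ[μ] 0 := by
    refine (hW (proj A f)).trans ?_
    rw [← hpt]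
    exact Filter.EventuallyEq.indicator hcomp
  have : ‖W (proj A f)‖ = 0 := by
    rw [Lp.norm_def, eLpNorm_congr_ae hWf, eLpNorm_zero]
    rfl
  rw [this]

end Norm2


theorem munorm_chainOp_sq (μ : Measure 𝒳) [IsProbabilityMeasure μ]
    (proj : Set 𝒳 → (Lp ℂ 2 μ →L[ℂ] Lp ℂ 2 μ))
    (hproj : IsIndicatorProj μ proj)
    (F : 𝒳 ≃ᵐ 𝒳) (hF : MeasurePreserving F μ μ)
    (U : Lp ℂ 2 μ →L[ℂ] Lp ℂ 2 μ)
    (hU : ∀ f : Lp ℂ 2 μ, (U f : 𝒳 → ℂ) =ᵐ[μ] fun x => f (F x))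
    (K : ℕ) (Y : Fin (K + 1) → Set 𝒳) (hY : ∀ k, MeasurableSet (Y k)) :
    munorm μ proj (chainOp μ proj U K Y) ^ 2
      = (μ (⋂ k : Fin (K + 1), (⇑F)^[K - (k : ℕ)] ⁻¹' Y k)).toReal := by
  set W := chainOp μ proj U K Y with hWdef
  set T : 𝒳 → 𝒳 := (⇑F)^[K] with hTdef
  have hT : MeasurePreserving T μ μ := hF.iterate K
  set Z := ⋂ k : Fin (K + 1), (⇑F)^[K - (k : ℕ)] ⁻¹' Y k with hZdef
  have hZ : MeasurableSet Z :=
    MeasurableSet.iInter fun k => (hY k).preimage (F.measurable.iterate _)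
  have hW : ∀ f : Lp ℂ 2 μ, (W f : 𝒳 → ℂ) =ᵐ[μ] Z.indicator (fun x => f (T x)) :=
    chain_ae μ proj hproj F hF U hU K Y hY
  -- the special set A with T ⁻¹' A = Z
  set A := (⇑F.symm)^[K] ⁻¹' Z with hAdef
  have hA : MeasurableSet A := hZ.preimage (F.symm.measurable.iterate K)
  have hli : ∀ x, (⇑F.symm)^[K] (T x) = x := fun x =>
    (Function.LeftInverse.iterate F.symm_apply_apply K) x
  have hTA : T ⁻¹' A = Z := by ext x; simp [hAdef, hli x]
  have hμA : μ A = μ Z :=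
    ((MeasurePreserving.symm F hF).iterate K).measure_preimage hZ.nullMeasurableSet
  -- the two-set partition {A, Aᶜ}
  have hunion : (⋃ j : Fin 2, ![A, Aᶜ] j) = Set.univ := by
    ext x
    simp [Fin.exists_fin_two, em]
  set χ : Partition μ :=
    ⟨2, ![A, Aᶜ],
      by intro j; fin_cases j; exacts [hA, hA.compl],
      by rw [hunion]; simp,
      by intro j k hjk; fin_cases j <;> fin_cases k <;>
        simp_all [Set.inter_compl_self, Set.compl_inter_self]⟩ with hχ
  -- value of M on χ
  have h1 : ‖W.comp (proj Aᶜ)‖ = 0 := by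
    refine opnorm_eq_zero μ proj W F hF K Z hZ hW hproj Aᶜ hA.compl ?_
    rw [← hTdef, Set.preimage_compl, hTA, Set.inter_compl_self]
  have h0 : ‖W.comp (proj A)‖ ≤ 1 :=
    opnorm_le_one μ proj W T hT Z hW hproj A hA
  have hMχ : M μ proj W χ ≤ (μ Z).toReal := by
    have : M μ proj W χ
        = (μ A).toReal * ‖W.comp (proj A)‖ ^ 2
          + (μ Aᶜ).toReal * ‖W.comp (proj Aᶜ)‖ ^ 2 := by
      simp only [M, hχ, Fin.sum_univ_two, Matrix.cons_val_zero, Matrix.cons_val_one,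
        Matrix.head_cons]
      exact Fin.sum_univ_two _
    rw [this, h1, hμA]
    have hle : (μ Z).toReal * ‖W.comp (proj A)‖ ^ 2 ≤ (μ Z).toReal * 1 := by
      have h0' : ‖W.comp (proj A)‖ ^ 2 ≤ 1 := by nlinarith [norm_nonneg (W.comp (proj A))]
      exact mul_le_mul_of_nonneg_left h0' ENNReal.toReal_nonneg
    nlinarith [ENNReal.toReal_nonneg (a := μ Aᶜ)]
  -- upper bound for the norm
  have hbdd : BddBelow (Set.range fun χ' : Partition μ => Real.sqrt (M μ proj W χ')) := by
    refine ⟨0, ?_⟩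
    rintro x ⟨χ', rfl⟩
    exact Real.sqrt_nonneg _
  have hub : munorm μ proj W ≤ Real.sqrt ((μ Z).toReal) :=
    le_trans (ciInf_le hbdd χ) (Real.sqrt_le_sqrt hMχ)
  -- lower bound for the norm
  have hlb : ∀ χ' : Partition μ, (μ Z).toReal ≤ M μ proj W χ' := by
    intro χ'
    have key : ∀ j, (μ (Z ∩ T ⁻¹' χ'.Y j)).toReal
        ≤ (μ (χ'.Y j)).toReal * ‖W.comp (proj (χ'.Y j))‖ ^ 2 := by
      intro j
      by_cases hj : μ (Z ∩ T ⁻¹' χ'.Y j) = 0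
      · rw [hj]
        simp only [ENNReal.toReal_zero]
        exact mul_nonneg ENNReal.toReal_nonneg (sq_nonneg _)
      · have h1' : 1 ≤ ‖W.comp (proj (χ'.Y j))‖ :=
          one_le_opnorm μ proj W F hF K Z hZ hW hproj (χ'.Y j) (χ'.meas j) hj
        have h2 : μ (Z ∩ T ⁻¹' χ'.Y j) ≤ μ (χ'.Y j) := by
          calc μ (Z ∩ T ⁻¹' χ'.Y j) ≤ μ (T ⁻¹' χ'.Y j) :=
                measure_mono Set.inter_subset_right
            _ = μ (χ'.Y j) := hT.measure_preimage (χ'.meas j).nullMeasurableSet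
        calc (μ (Z ∩ T ⁻¹' χ'.Y j)).toReal ≤ (μ (χ'.Y j)).toReal :=
              ENNReal.toReal_mono (measure_ne_top _ _) h2
          _ ≤ (μ (χ'.Y j)).toReal * ‖W.comp (proj (χ'.Y j))‖ ^ 2 := by
              have hsq : (1 : ℝ) ≤ ‖W.comp (proj (χ'.Y j))‖ ^ 2 := by
                calc (1 : ℝ) = 1 ^ 2 := (one_pow 2).symm
                  _ ≤ _ := pow_le_pow_left₀ zero_le_one h1' 2
              exact le_mul_of_one_le_right ENNReal.toReal_nonneg hsq
    have hsum : (μ Z).toReal ≤ ∑ j, (μ (Z ∩ T ⁻¹' χ'.Y j)).toReal := by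
      have hcov : μ (Z \ ⋃ j, T ⁻¹' χ'.Y j) = 0 := by
        have hsub : Z \ (⋃ j, T ⁻¹' χ'.Y j) ⊆ T ⁻¹' (Set.univ \ ⋃ j, χ'.Y j) := by
          intro x hx
          simp only [Set.mem_diff, Set.mem_iUnion, Set.mem_preimage, Set.mem_univ,
            true_and, not_exists] at hx ⊢
          exact hx.2
        refine measure_mono_null hsub ?_
        rw [hT.measure_preimage
          ((MeasurableSet.univ.diff (MeasurableSet.iUnion fun j => χ'.meas j)).nullMeasurableSet)]
        exact χ'.cover
      have e1 : μ Z ≤ ∑ j, μ (Z ∩ T ⁻¹' χ'.Y j) := by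
        calc μ Z ≤ μ (Z ∩ ⋃ j, T ⁻¹' χ'.Y j) + μ (Z \ ⋃ j, T ⁻¹' χ'.Y j) :=
              measure_le_inter_add_diff μ _ _
          _ = μ (⋃ j, Z ∩ T ⁻¹' χ'.Y j) := by rw [hcov, add_zero, Set.inter_iUnion]
          _ ≤ ∑ j, μ (Z ∩ T ⁻¹' χ'.Y j) := measure_iUnion_fintype_le μ _
      have hne : (∑ j, μ (Z ∩ T ⁻¹' χ'.Y j)) ≠ ⊤ :=
        ne_of_lt (ENNReal.sum_lt_top.mpr fun j _ => measure_lt_top _ _)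
      calc (μ Z).toReal ≤ (∑ j, μ (Z ∩ T ⁻¹' χ'.Y j)).toReal :=
            ENNReal.toReal_mono hne e1
        _ = ∑ j, (μ (Z ∩ T ⁻¹' χ'.Y j)).toReal :=
            ENNReal.toReal_sum fun j _ => measure_ne_top _ _
    calc (μ Z).toReal ≤ ∑ j, (μ (Z ∩ T ⁻¹' χ'.Y j)).toReal := hsum
      _ ≤ ∑ j, (μ (χ'.Y j)).toReal * ‖W.comp (proj (χ'.Y j))‖ ^ 2 :=
          Finset.sum_le_sum fun j _ => key j
      _ = M μ proj W χ' := rfl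
  have hlow : Real.sqrt ((μ Z).toReal) ≤ munorm μ proj W := by
    haveI : Nonempty (Partition μ) := ⟨χ⟩
    exact le_ciInf fun χ' => Real.sqrt_le_sqrt (hlb χ')
  have heq : munorm μ proj W = Real.sqrt ((μ Z).toReal) := le_antisymm hub hlow
  rw [heq, Real.sq_sqrt ENNReal.toReal_nonneg]

end MuNorm
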